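/- Let H and x be integers with 1 < H < p, x > 0, H ∤ x; set Q = ⌊x/H⌋, R = x mod H, S₁ = [0, p−1] \ {H − R}, S₂ = {H − R} ∪ [H, p−1]. Let a₀ < a₁ < ⋯ enumerate {n ≥ H : n mod p ∈ S₁} and b₀ < b₁ < ⋯ enumerate {n ≥ p + H − R : n mod p ∈ S₂}. Then a_y = H + y + ⌊(R − 1 + y)/(p − 1)⌋ and b_y = p + H − 1 + y + (H − R)·⌊y/(p − H + 1)⌋ + (R − 1)·⌊(y − 1)/(p − H + 1)⌋ for all y ≥ 0. -/

import Mathlib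

private lemma enum_unique (a b : ℕ → ℤ) (ha : StrictMono a) (hb : StrictMono b)
    (h : ∀ n : ℤ, (∃ y, a y = n) ↔ (∃ y, b y = n)) : ∀ y, a y = b y := by
  intro y
  induction y using Nat.strong_induction_on with
  | _ y ih =>
    have h1 : b y ≤ a y := by
      obtain ⟨w, hw⟩ := (h (a y)).1 ⟨y, rfl⟩
      rcases lt_or_ge w y with hlt | hge
      · exact absurd (ha.injective ((ih w hlt).trans hw)) (Nat.ne_of_lt hlt)
      · exact hw ▸ hb.monotone hge
    have h2 : a y ≤ b y := by
      obtain ⟨w, hw⟩ := (h (b y)).2 ⟨y, rfl⟩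
      rcases lt_or_ge w y with hlt | hge
      · exact absurd (hb.injective ((ih w hlt).symm.trans hw)) (Nat.ne_of_lt hlt)
      · exact hw ▸ ha.monotone hge
    omega

private lemma ediv_eq_of {c m k : ℤ} (hc : 0 < c) (h1 : k * c ≤ m) (h2 : m < k * c + c) :
    m / c = k := by
  have hm : m = (m - k * c) + k * c := by ring
  rw [hm, Int.add_mul_ediv_right _ _ (ne_of_gt hc),
    Int.ediv_eq_zero_of_lt (by linarith) (by linarith), zero_add]

private lemma ediv_bounds {c m : ℤ} (hc : 0 < c) : (m / c) * c ≤ m ∧ m < (m / c) * c + c := by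
  have h := Int.ediv_mul_add_emod m c
  have h3 := Int.emod_nonneg m (ne_of_gt hc)
  have h4 := Int.emod_lt_of_pos m hc
  constructor <;> linarith

/-- With `R = x mod H`: `n mod p ∈ S₁ = [0, p-1] \ {H - R}`. -/
def inS1 (p H x n : ℤ) : Prop :=
  0 ≤ n.emod p ∧ n.emod p ≤ p - 1 ∧ n.emod p ≠ H - x.emod H

/-- With `R = x mod H`: `n mod p ∈ S₂ = {H - R} ∪ [H, p-1]`. -/
def inS2 (p H x n : ℤ) : Prop :=
  n.emod p = H - x.emod H ∨ (H ≤ n.emod p ∧ n.emod p ≤ p - 1)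

/-- If `a₀ < a₁ < ⋯` enumerates `{n ≥ H : n mod p ∈ S₁}` and `b₀ < b₁ < ⋯` enumerates
`{n ≥ p + H - R : n mod p ∈ S₂}` then `a_y = H + y + ⌊(R - 1 + y)/(p - 1)⌋` and
`b_y = p + H - 1 + y + (H - R)·⌊y/(p - H + 1)⌋ + (R - 1)·⌊(y - 1)/(p - H + 1)⌋`. -/
theorem stmt17 (p H x : ℤ) (hH : 1 < H) (hHp : H < p) (hx : 0 < x) (hnd : ¬ H ∣ x)
    (a b : ℕ → ℤ) (hma : StrictMono a) (hmb : StrictMono b)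
    (hra : ∀ n : ℤ, ((H ≤ n ∧ inS1 p H x n) ↔ ∃ y, a y = n))
    (hrb : ∀ n : ℤ, ((p + H - x.emod H ≤ n ∧ inS2 p H x n) ↔ ∃ y, b y = n)) :
    (∀ y : ℕ, a y = H + y + ((x.emod H - 1 + y).fdiv (p - 1))) ∧
    (∀ y : ℕ, b y = p + H - 1 + y + (H - x.emod H) * ((y : ℤ).fdiv (p - H + 1))
      + (x.emod H - 1) * (((y : ℤ) - 1).fdiv (p - H + 1))) := by
  have hmod : ∀ a b : ℤ, a.emod b = a % b := fun _ _ => rfl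
  simp only [hmod] at hrb ⊢
  set R := x % H with hRdef
  have hp : (0:ℤ) < p := by linarith
  have hp1 : (0:ℤ) < p - 1 := by linarith
  have hR1 : 1 ≤ R := by
    have h0 : 0 ≤ x % H := Int.emod_nonneg x (by omega)
    have hne : x % H ≠ 0 := fun h => hnd (Int.dvd_of_emod_eq_zero h)
    omega
  have hR2 : R ≤ H - 1 := by
    have := Int.emod_lt_of_pos x (show (0:ℤ) < H by omega)
    omega
  set L := p - H + 1 with hLdef
  have hLpos : (0:ℤ) < L := by omega
  -- Part A : range characterization
  have hA : ∀ n : ℤ, (H ≤ n ∧ inS1 p H x n) ↔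
      ∃ y : ℕ, H + (y:ℤ) + (R - 1 + (y:ℤ)) / (p - 1) = n := by
    intro n
    simp only [inS1, hmod, ← hRdef]
    constructor
    · rintro ⟨hn, -, -, hne⟩
      obtain ⟨hk1, hk2⟩ := ediv_bounds (c := p) (m := n - H + R) hp
      set k := (n - H + R) / p with hkdef
      have hne' : n - H + R ≠ k * p := by
        intro heq
        apply hne
        have hn2 : n = (H - R) + p * k := by linarith
        rw [hn2, Int.add_mul_emod_self_left, Int.emod_eq_of_lt (by omega) (by omega)]
      have hstrict : k * p + 1 ≤ n - H + R :=
        Int.add_one_le_iff.mpr (lt_of_le_of_ne hk1 hne'.symm)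
      have hkle : k ≤ n - H := by
        by_contra hcon
        push_neg at hcon
        have h5 : (n - H + 1) * p ≤ k * p := mul_le_mul_of_nonneg_right (by omega) hp.le
        have h6 : (n - H) ≤ (n - H) * p := le_mul_of_one_le_right (by omega) (by omega)
        have h7 : (n - H + 1) * p = (n - H) * p + p := by ring
        linarith
      refine ⟨(n - H - k).toNat, ?_⟩
      have hy : ((n - H - k).toNat : ℤ) = n - H - k := Int.toNat_of_nonneg (by omega)
      rw [hy]
      have e : k * (p - 1) = k * p - k := by ring
      have hdv : (R - 1 + (n - H - k)) / (p - 1) = k :=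
        ediv_eq_of hp1 (by linarith) (by linarith)
      rw [hdv]; ring
    · rintro ⟨y, rfl⟩
      have hy0 : (0:ℤ) ≤ (y:ℤ) := Int.natCast_nonneg y
      obtain ⟨hk1, hk2⟩ := ediv_bounds (c := p - 1) (m := R - 1 + (y:ℤ)) hp1
      set k := (R - 1 + (y:ℤ)) / (p - 1) with hkdef
      have hk0 : 0 ≤ k := Int.ediv_nonneg (by omega) hp1.le
      refine ⟨by linarith, Int.emod_nonneg _ (ne_of_gt hp), ?_, ?_⟩
      · have := Int.emod_lt_of_pos (H + (y:ℤ) + k) hp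
        linarith
      · intro habs
        have hj := Int.mul_ediv_add_emod (H + (y:ℤ) + k) p
        set j := (H + (y:ℤ) + k) / p with hjdef
        rw [habs] at hj
        have e1 : k * (p - 1) = k * p - k := by ring
        have e2 : k * p = p * k := by ring
        have c1 : p * k < p * j := by linarith
        have c2 : p * j < p * (k + 1) := by
          have e3 : p * (k + 1) = p * k + p := by ring
          linarith
        have g1 := Int.lt_of_mul_lt_mul_left c1 hp.le
        have g2 := Int.lt_of_mul_lt_mul_left c2 hp.le
        omega
  -- Part B : range characterization
  have hB : ∀ n : ℤ, (p + H - R ≤ n ∧ inS2 p H x n) ↔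
      ∃ y : ℕ, p + H - 1 + (y:ℤ) + (H - R) * ((y:ℤ) / L) + (R - 1) * (((y:ℤ) - 1) / L) = n := by
    intro n
    simp only [inS2, hmod, ← hRdef]
    constructor
    · rintro ⟨hn, hs⟩
      have hj := Int.mul_ediv_add_emod n p
      set j := n / p with hjdef
      set s := n % p with hsdef
      have hs0 : 0 ≤ s := Int.emod_nonneg n (ne_of_gt hp)
      have hsp : s < p := Int.emod_lt_of_pos n hp
      have hj1 : 1 ≤ j := by
        by_contra hcon
        push_neg at hcon
        have h5 : p * j ≤ p * 0 := mul_le_mul_of_nonneg_left (by omega) hp.le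
        have h6 : p * 0 = 0 := by ring
        linarith
      rcases hs with hs | ⟨hsl, hsu⟩
      · refine ⟨((j - 1) * L).toNat, ?_⟩
        have hy : (((j - 1) * L).toNat : ℤ) = (j - 1) * L :=
          Int.toNat_of_nonneg (mul_nonneg (by omega) hLpos.le)
        rw [hy]
        have d1 : ((j - 1) * L) / L = j - 1 := ediv_eq_of hLpos le_rfl (by linarith)
        have e1 : (j - 2) * L = (j - 1) * L - L := by ring
        have d2 : ((j - 1) * L - 1) / L = j - 2 :=
          ediv_eq_of hLpos (by linarith) (by linarith)
        rw [d1, d2]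
        have hn2 : n = p * j + (H - R) := by rw [← hs]; linarith
        rw [hn2, hLdef]; ring
      · refine ⟨((j - 1) * L + (s - H + 1)).toNat, ?_⟩
        have hnn : (0:ℤ) ≤ (j - 1) * L := mul_nonneg (by omega) hLpos.le
        have hy : (((j - 1) * L + (s - H + 1)).toNat : ℤ) = (j - 1) * L + (s - H + 1) :=
          Int.toNat_of_nonneg (by linarith)
        rw [hy]
        have hsL : s - H + 1 ≤ L - 1 := by omega
        have d1 : ((j - 1) * L + (s - H + 1)) / L = j - 1 :=
          ediv_eq_of hLpos (by linarith) (by linarith)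
        have d2 : ((j - 1) * L + (s - H + 1) - 1) / L = j - 1 :=
          ediv_eq_of hLpos (by linarith) (by linarith)
        rw [d1, d2]
        have hn2 : n = p * j + s := by linarith
        rw [hn2, hLdef]; ring
    · rintro ⟨y, rfl⟩
      have hy0 : (0:ℤ) ≤ (y:ℤ) := Int.natCast_nonneg y
      obtain ⟨hq1, hq2⟩ := ediv_bounds (c := L) (m := (y:ℤ)) hLpos
      set q := (y:ℤ) / L with hqdef
      have hq0 : 0 ≤ q := Int.ediv_nonneg hy0 hLpos.le
      have hpq : p * 1 ≤ p * (q + 1) := mul_le_mul_of_nonneg_left (by omega) hp.le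
      have hpq1 : p * 1 = p := by ring
      rcases eq_or_lt_of_le hq1 with hr0 | hr1
      · have e1 : (q - 1) * L = q * L - L := by ring
        have d2 : ((y:ℤ) - 1) / L = q - 1 :=
          ediv_eq_of hLpos (by linarith) (by linarith)
        have hval : p + H - 1 + (y:ℤ) + (H - R) * q + (R - 1) * (q - 1)
            = (H - R) + p * (q + 1) := by
          rw [← hr0, hLdef]; ring
        rw [d2, hval]
        refine ⟨by linarith, Or.inl ?_⟩
        rw [Int.add_mul_emod_self_left, Int.emod_eq_of_lt (by omega) (by omega)]
      · have d2 : ((y:ℤ) - 1) / L = q :=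
          ediv_eq_of hLpos (by linarith) (by linarith)
        have hval : p + H - 1 + (y:ℤ) + (H - R) * q + (R - 1) * q
            = (H - 1 + ((y:ℤ) - q * L)) + p * (q + 1) := by
          rw [hLdef]; ring
        rw [d2, hval]
        have hres1 : 1 ≤ (y:ℤ) - q * L := by linarith
        have hres2 : (y:ℤ) - q * L ≤ L - 1 := by linarith
        refine ⟨by linarith, Or.inr ?_⟩
        rw [Int.add_mul_emod_self_left, Int.emod_eq_of_lt (by linarith) (by linarith)]
        constructor <;> linarith
  -- conclude
  have haA := enum_unique a (fun y => H + (y:ℤ) + (R - 1 + (y:ℤ)) / (p - 1)) hma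
    (by
      apply strictMono_nat_of_lt_succ
      intro y
      have hle := Int.ediv_le_ediv hp1 (show R - 1 + (y:ℤ) ≤ R - 1 + ((y:ℤ) + 1) by linarith)
      show H + (y:ℤ) + (R - 1 + (y:ℤ)) / (p - 1) < H + ((y:ℕ)+1 : ℕ) + (R - 1 + ((y:ℕ)+1 : ℕ)) / (p - 1)
      push_cast
      linarith)
    (fun n => (hra n).symm.trans (hA n))
  have hbB := enum_unique b
    (fun y => p + H - 1 + (y:ℤ) + (H - R) * ((y:ℤ) / L) + (R - 1) * (((y:ℤ) - 1) / L)) hmb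
    (by
      apply strictMono_nat_of_lt_succ
      intro y
      have d1 : (y:ℤ) / L ≤ ((y:ℤ) + 1) / L := Int.ediv_le_ediv hLpos (by linarith)
      have d2 : ((y:ℤ) - 1) / L ≤ (y:ℤ) / L := Int.ediv_le_ediv hLpos (by linarith)
      have m1 := mul_le_mul_of_nonneg_left d1 (show (0:ℤ) ≤ H - R by omega)
      have m2 := mul_le_mul_of_nonneg_left d2 (show (0:ℤ) ≤ R - 1 by omega)
      show p + H - 1 + (y:ℤ) + (H - R) * ((y:ℤ) / L) + (R - 1) * (((y:ℤ) - 1) / L)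
        < p + H - 1 + ((y:ℕ)+1 : ℕ) + (H - R) * ((((y:ℕ)+1 : ℕ) : ℤ) / L)
          + (R - 1) * (((((y:ℕ)+1 : ℕ) : ℤ) - 1) / L)
      push_cast
      have e : ((y:ℤ) + 1 - 1) = (y:ℤ) := by ring
      rw [e]
      linarith)
    (fun n => (hrb n).symm.trans (hB n))
  constructor
  · intro y
    rw [Int.fdiv_eq_ediv_of_nonneg _ (by linarith : (0:ℤ) ≤ p - 1)]
    exact haA y
  · intro y
    rw [Int.fdiv_eq_ediv_of_nonneg _ hLpos.le, Int.fdiv_eq_ediv_of_nonneg _ hLpos.le]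
    exact hbB y
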